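/- Let q be an odd prime power with q ≡ 1 (mod 3), q ≥ 13, and let π(x) = a + r/(x−i) and σ(x) = b + r/(x−j) be distinct elements of PGL(2,q) with (b−a)(j−i) = r, r ≠ 0. Then π and σ agree at exactly two points of GF(q) ∪ {∞}, namely x = (1/2)[i(1+√−3) + j(1−√−3)] and x = (1/2)[i(1−√−3) + j(1+√−3)], where √−3 is a square root of −3 in GF(q). -/

import Mathlib

open OnePoint
open scoped Classical

/-- The map `x ↦ k + r/(x - i)` on `K ∪ {∞}`, with `f ∞ = k` and `f i = ∞`. -/
noncomputable def pform {K : Type*} [Field K] (k r i : K) (x : OnePoint K) : OnePoint K :=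
  Option.elim x ((k : OnePoint K))
    (fun y => if y = i then ∞ else ((k + r / (y - i) : K) : OnePoint K))

theorem stmt13 {K : Type*} [Field K] [Fintype K] (q : ℕ) (hq : Fintype.card K = q)
    (hodd : Odd q) (hq3 : q % 3 = 1) (hq13 : 13 ≤ q)
    (π σ : Equiv.Perm (OnePoint K)) (a r i b j t : K) (hr : r ≠ 0)
    (ht : t ^ 2 = -3)
    (hπ : ∀ x, π x = pform a r i x) (hσ : ∀ x, σ x = pform b r j x)
    (hπσ : π ≠ σ) (hrel : (b - a) * (j - i) = r) :
    (1 / 2 * (i * (1 + t) + j * (1 - t)) : K) ≠ 1 / 2 * (i * (1 - t) + j * (1 + t)) ∧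
      {x : OnePoint K | π x = σ x} =
        {((1 / 2 * (i * (1 + t) + j * (1 - t)) : K) : OnePoint K),
         ((1 / 2 * (i * (1 - t) + j * (1 + t)) : K) : OnePoint K)} := by
  -- characteristic facts
  obtain ⟨p, hp⟩ := CharP.exists K
  haveI := hp
  have hpp : p.Prime := CharP.char_is_prime K p
  obtain ⟨n, -, hcard⟩ := FiniteField.card K p
  have h2 : (2 : K) ≠ 0 := by
    intro h
    have hdvd : p ∣ 2 := by
      have h' : ((2 : ℕ) : K) = 0 := by exact_mod_cast h
      exact (CharP.cast_eq_zero_iff K p 2).mp h'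
    have hp2 : p = 2 := (Nat.prime_dvd_prime_iff_eq hpp Nat.prime_two).mp hdvd
    have hdq : 2 ∣ q := by
      rw [← hq, hcard, hp2]
      exact dvd_pow_self 2 n.pos.ne'
    have := Nat.odd_iff.mp hodd
    omega
  have h3 : (3 : K) ≠ 0 := by
    intro h
    have hdvd : p ∣ 3 := by
      have h' : ((3 : ℕ) : K) = 0 := by exact_mod_cast h
      exact (CharP.cast_eq_zero_iff K p 3).mp h'
    have hp3 : p = 3 := (Nat.prime_dvd_prime_iff_eq hpp Nat.prime_three).mp hdvd
    have hdq : 3 ∣ q := by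
      rw [← hq, hcard, hp3]
      exact dvd_pow_self 3 n.pos.ne'
    omega
  have hab : a ≠ b := by
    intro h; apply hr; rw [← hrel, h]; ring
  have hij : i ≠ j := by
    intro h; apply hr; rw [← hrel, h]; ring
  have ht0 : t ≠ 0 := by
    intro h
    apply h3
    linear_combination ht - t * h
  set x₁ : K := 1 / 2 * (i * (1 + t) + j * (1 - t)) with hx1
  set x₂ : K := 1 / 2 * (i * (1 - t) + j * (1 + t)) with hx2
  have e1 : x₁ + x₂ = i + j := by rw [hx1, hx2]; field_simp; ring
  have e2 : x₁ * x₂ = i ^ 2 - i * j + j ^ 2 := by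
    rw [hx1, hx2]
    field_simp
    linear_combination (-(i - j) ^ 2) * ht
  have e0 : x₁ - x₂ = t * (i - j) := by rw [hx1, hx2]; field_simp; ring
  have hne : x₁ ≠ x₂ := by
    intro h
    have h0 : t * (i - j) = 0 := by rw [← e0, h]; ring
    rcases mul_eq_zero.mp h0 with h' | h'
    · exact ht0 h'
    · exact hij (sub_eq_zero.mp h')
  have hprod : ∀ y : K, (y - x₁) * (y - x₂) = (y - i) * (y - j) + (j - i) ^ 2 := by
    intro y
    linear_combination (-y) * e1 + e2
  have hij2 : -((j - i) : K) ^ 2 ≠ 0 := by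
    simpa using pow_ne_zero 2 (sub_ne_zero.mpr (Ne.symm hij))
  have hroots : ∀ y : K, (y - x₁) * (y - x₂) = 0 → y ≠ i ∧ y ≠ j := by
    intro y hy
    have hP : (y - i) * (y - j) = -((j - i) ^ 2) := by linear_combination hy - hprod y
    refine ⟨fun h => hij2 ?_, fun h => hij2 ?_⟩
    · rw [← hP, h]; ring
    · rw [← hP, h]; ring
  have hx1r : (x₁ - x₁) * (x₁ - x₂) = 0 := by ring
  have hx2r : (x₂ - x₁) * (x₂ - x₂) = 0 := by ring
  have hx1i : x₁ ≠ i := (hroots x₁ hx1r).1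
  have hx1j : x₁ ≠ j := (hroots x₁ hx1r).2
  have hx2i : x₂ ≠ i := (hroots x₂ hx2r).1
  have hx2j : x₂ ≠ j := (hroots x₂ hx2r).2
  have hba : b - a ≠ 0 := sub_ne_zero.mpr (Ne.symm hab)
  -- the key equivalence on K
  have key : ∀ y : K, y ≠ i → y ≠ j →
      (a + r / (y - i) = b + r / (y - j) ↔ (y - x₁) * (y - x₂) = 0) := by
    intro y hyi hyj
    have hyi' : y - i ≠ 0 := sub_ne_zero.mpr hyi
    have hyj' : y - j ≠ 0 := sub_ne_zero.mpr hyj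
    have hD : (y - i) * (y - j) ≠ 0 := mul_ne_zero hyi' hyj'
    have l1 : a + r / (y - i) = (a * (y - i) * (y - j) + r * (y - j)) / ((y - i) * (y - j)) := by
      field_simp
    have l2 : b + r / (y - j) = (b * (y - i) * (y - j) + r * (y - i)) / ((y - i) * (y - j)) := by
      field_simp
    rw [l1, l2, div_eq_div_iff hD hD]
    constructor
    · intro h
      have hpoly2 : a * (y - i) * (y - j) + r * (y - j) =
          b * (y - i) * (y - j) + r * (y - i) := mul_right_cancel₀ hD h
      have key0 : (b - a) * ((y - x₁) * (y - x₂)) = 0 := by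
        linear_combination (b - a) * (hprod y) - hpoly2 - (i - j) * hrel
      exact (mul_eq_zero.mp key0).resolve_left hba
    · intro hy
      have hpoly2 : a * (y - i) * (y - j) + r * (y - j) =
          b * (y - i) * (y - j) + r * (y - i) := by
        linear_combination (-(b - a)) * hy + (b - a) * (hprod y) - (i - j) * hrel
      rw [hpoly2]
  refine ⟨hne, ?_⟩
  ext x
  simp only [Set.mem_setOf_eq, Set.mem_insert_iff, Set.mem_singleton_iff, hπ, hσ]
  cases x with
  | infty =>
    constructor
    · intro h
      exact absurd (OnePoint.coe_eq_coe.mp h) hab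
    · rintro (h | h) <;> exact absurd h (OnePoint.infty_ne_coe _)
  | coe y =>
    by_cases hyi : y = i
    · subst hyi
      have hL : pform a r y y = ∞ := by simp [pform, OnePoint.some]; exact if_pos rfl
      have hR : pform b r j y = ((b + r / (y - j) : K) : OnePoint K) := by
        simp [pform, OnePoint.some, hij]
        exact if_neg hij
      rw [hL, hR]
      constructor
      · intro h
        exact absurd h (OnePoint.infty_ne_coe _)
      · rintro (h | h)
        · exact absurd (OnePoint.coe_eq_coe.mp h).symm hx1i
        · exact absurd (OnePoint.coe_eq_coe.mp h).symm hx2i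
    · by_cases hyj : y = j
      · subst hyj
        have hL : pform a r i y = ((a + r / (y - i) : K) : OnePoint K) := by
          simp [pform, OnePoint.some, hyi]
          exact if_neg hyi
        have hR : pform b r y y = ∞ := by simp [pform, OnePoint.some]; exact if_pos rfl
        rw [hL, hR]
        constructor
        · intro h
          exact absurd h (OnePoint.coe_ne_infty _)
        · rintro (h | h)
          · exact absurd (OnePoint.coe_eq_coe.mp h).symm hx1j
          · exact absurd (OnePoint.coe_eq_coe.mp h).symm hx2j
      · have hL : pform a r i y = ((a + r / (y - i) : K) : OnePoint K) := by
          simp [pform, OnePoint.some, hyi]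
          exact if_neg hyi
        have hR : pform b r j y = ((b + r / (y - j) : K) : OnePoint K) := by
          simp [pform, OnePoint.some, hyj]
          exact if_neg hyj
        rw [hL, hR]
        rw [OnePoint.coe_eq_coe, OnePoint.coe_eq_coe, OnePoint.coe_eq_coe]
        rw [key y hyi hyj, mul_eq_zero, sub_eq_zero, sub_eq_zero]
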